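/- Uniqueness of scattering states for the model system, single-mode version: let λ ≥ 0, and let (a, c) and (ã, c̃) be two pairs solving the mode-λ model system on (0,∞) that have the same asymptotic data (c₀, O, h) at τ = 0. Then a(τ) = ã(τ) and c(τ) = c̃(τ) for all τ > 0. -/

import Mathlib

open Set Filter Topology

/-- The pair `(a, c)` solves the mode-`lam` model system on `I ⊆ (0,∞)`:
`a` is twice differentiable and `c` is differentiable on `I`, and for all `τ ∈ I`,
(E) `a'' + τ⁻¹·a' + 4q'·a + 4λ²·(τ²+1)⁻²·a = f₁·τ·a' + f₂·τ²·a + f₃·c` and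
(C) `c' = 2τ·a`. -/
def SolvesModelSystem (q' : ℝ) (f₁ f₂ f₃ : ℝ → ℝ) (lam : ℝ)
    (a c : ℝ → ℝ) (I : Set ℝ) : Prop :=
  ∀ τ ∈ I,
    DifferentiableAt ℝ a τ ∧ DifferentiableAt ℝ (deriv a) τ ∧ DifferentiableAt ℝ c τ ∧
    (deriv (deriv a) τ + τ⁻¹ * deriv a τ + 4 * q' * a τ
        + 4 * lam ^ 2 * ((τ ^ 2 + 1) ^ 2)⁻¹ * a τ
      = f₁ τ * τ * deriv a τ + f₂ τ * τ ^ 2 * a τ + f₃ τ * c τ) ∧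
    deriv c τ = 2 * τ * a τ

/-- The pair `(a, c)` (solving the model system on `(0,∞)`, with `c` extended
continuously to `[0,∞)`) has asymptotic data `(c₀, O, h)` at `τ = 0`. -/
def HasAsymptoticData (a c : ℝ → ℝ) (c₀ O h : ℝ) : Prop :=
  ContinuousOn c (Ici 0) ∧ c 0 = c₀ ∧
  ∃ K : ℝ, 0 ≤ K ∧ ∀ τ ∈ Ioc (0:ℝ) 1,
    |a τ - O * Real.log τ - h| ≤ K * τ ^ 2 * (1 + Real.log τ ^ 2) ∧
    |deriv a τ - O / τ| ≤ K * τ * (1 + Real.log τ ^ 2)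

private lemma cross_bound (α β x y : ℝ) (hab : |α| ≤ β) : 2*α*x*y ≤ β*(x^2+y^2) := by
  obtain ⟨h1, h2⟩ := abs_le.mp hab
  nlinarith [mul_nonneg (sub_nonneg.2 h2) (sq_nonneg (x-y)),
    mul_nonneg (by linarith : (0:ℝ) ≤ β + α) (sq_nonneg (x+y))]

private lemma abs_sub_le'' (x y : ℝ) : |x - y| ≤ |x| + |y| := by
  simpa [sub_eq_add_neg, abs_neg] using abs_add_le x (-y)

private lemma tendsto_mul_one_add_log_sq :
    Tendsto (fun x : ℝ => x * (1 + Real.log x ^ 2)) (𝓝[>] 0) (𝓝 0) := by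
  have h := tendsto_log_mul_rpow_nhdsGT_zero (r := 1/2) (by norm_num)
  have hid : Tendsto (fun x : ℝ => x) (𝓝[>] (0:ℝ)) (𝓝 0) :=
    tendsto_id.mono_left nhdsWithin_le_nhds
  have h2 : Tendsto (fun x : ℝ => x + (Real.log x * x ^ (1/2 : ℝ))^2) (𝓝[>] 0) (𝓝 0) := by
    have := hid.add ((h.pow 2))
    simpa using this
  refine h2.congr' ?_
  filter_upwards [self_mem_nhdsWithin] with x (hx : 0 < x)
  have hx2 : (x ^ (1/2 : ℝ))^2 = x := by
    rw [← Real.rpow_natCast (x ^ (1/2:ℝ)) 2, ← Real.rpow_mul hx.le]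
    norm_num
  rw [mul_pow, hx2]; ring

private lemma energy_bound (F t q' lam τ μ V U W f1 f2 f3 : ℝ)
    (hF : 0 ≤ F) (hq : 1 ≤ q') (ht : 0 < t)
    (hb1 : 2 * (f1 * τ) * V * V ≤ F * t * (V ^ 2 + V ^ 2))
    (hb2 : 2 * (f2 * τ ^ 2 - (4 * q' + μ) + 1) * U * V
      ≤ (F * t ^ 2 + 4 * q' + 4 * lam ^ 2 + 1) * (U ^ 2 + V ^ 2))
    (hb3 : 2 * f3 * V * W ≤ F * (V ^ 2 + W ^ 2))
    (hb4 : 2 * (2 * τ) * U * W ≤ 2 * t * (U ^ 2 + W ^ 2))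
    (hb5 : 0 ≤ τ⁻¹ * V ^ 2) :
    2 * V * (f1 * τ * V + f2 * τ ^ 2 * U + f3 * W - τ⁻¹ * V - (4 * q' + μ) * U) + 2 * U * V +
        2 * W * (2 * τ * U) ≤
      (2 * F * t + (F * t ^ 2 + 4 * q' + 4 * lam ^ 2 + 1) + F + 2 * t) * (V ^ 2 + U ^ 2 + W ^ 2) := by
  linarith [mul_nonneg ht.le (sq_nonneg V), mul_nonneg hF (sq_nonneg U),
      mul_nonneg (mul_nonneg hF ht.le) (sq_nonneg U),
      mul_nonneg (mul_nonneg hF ht.le) (sq_nonneg W),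
      mul_nonneg (mul_nonneg hF (sq_nonneg t)) (sq_nonneg W),
      mul_nonneg (sq_nonneg lam) (sq_nonneg W),
      mul_nonneg (by linarith : (0:ℝ) ≤ q') (sq_nonneg W),
      sq_nonneg W]

set_option maxHeartbeats 1000000 in
/-- Uniqueness of scattering states for the model system (single-mode version of
Proposition 3.6 / "uniqueness of smooth solutions" of the paper). -/
theorem uniqueness_of_scattering_states (q' F : ℝ) (hq : 1 ≤ q') (hF : 0 ≤ F)
    (f₁ f₂ f₃ : ℝ → ℝ)
    (hf₁c : ContinuousOn f₁ (Ici 0)) (hf₂c : ContinuousOn f₂ (Ici 0))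
    (hf₃c : ContinuousOn f₃ (Ici 0))
    (hf₁ : ∀ τ ≥ (0:ℝ), |f₁ τ| ≤ F) (hf₂ : ∀ τ ≥ (0:ℝ), |f₂ τ| ≤ F)
    (hf₃ : ∀ τ ≥ (0:ℝ), |f₃ τ| ≤ F)
    (lam : ℝ) (hlam : 0 ≤ lam)
    (a c a' c' : ℝ → ℝ) (c₀ O h : ℝ)
    (hsol : SolvesModelSystem q' f₁ f₂ f₃ lam a c (Ioi 0))
    (hsol' : SolvesModelSystem q' f₁ f₂ f₃ lam a' c' (Ioi 0))
    (hdata : HasAsymptoticData a c c₀ O h)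
    (hdata' : HasAsymptoticData a' c' c₀ O h) :
    ∀ τ > (0:ℝ), a τ = a' τ ∧ c τ = c' τ := by
  obtain ⟨hcn, hc0, K, hK0, hKb⟩ := hdata
  obtain ⟨hcn', hc0', K', hK0', hKb'⟩ := hdata'
  set u : ℝ → ℝ := fun x => a x - a' x with hudef
  set v : ℝ → ℝ := fun x => deriv a x - deriv a' x with hvdef
  set w : ℝ → ℝ := fun x => c x - c' x with hwdef
  set E : ℝ → ℝ := fun x => v x ^ 2 + u x ^ 2 + w x ^ 2 with hEdef
  -- derivative facts
  have hu' : ∀ τ ∈ Ioi (0:ℝ), HasDerivAt u (v τ) τ := fun τ hτ =>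
    ((hsol τ hτ).1.hasDerivAt.sub (hsol' τ hτ).1.hasDerivAt)
  have hw' : ∀ τ ∈ Ioi (0:ℝ), HasDerivAt w (2 * τ * u τ) τ := by
    intro τ hτ
    have h1 := (hsol τ hτ).2.2.1.hasDerivAt
    have h2 := (hsol' τ hτ).2.2.1.hasDerivAt
    rw [(hsol τ hτ).2.2.2.2] at h1
    rw [(hsol' τ hτ).2.2.2.2] at h2
    have h3 := h1.sub h2
    rw [hwdef, hudef]
    refine h3.congr_deriv ?_
    ring
  have hv' : ∀ τ ∈ Ioi (0:ℝ), HasDerivAt v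
      (f₁ τ * τ * v τ + f₂ τ * τ^2 * u τ + f₃ τ * w τ
        - τ⁻¹ * v τ - (4*q' + 4*lam^2 * ((τ^2+1)^2)⁻¹) * u τ) τ := by
    intro τ hτ
    have h1 := (hsol τ hτ).2.1.hasDerivAt
    have h2 := (hsol' τ hτ).2.1.hasDerivAt
    have h3 := h1.sub h2
    rw [hvdef]
    refine h3.congr_deriv ?_
    have e1 := (hsol τ hτ).2.2.2.1
    have e2 := (hsol' τ hτ).2.2.2.1
    simp only [hudef, hvdef, hwdef]
    linear_combination e1 - e2
  have hE' : ∀ τ ∈ Ioi (0:ℝ), HasDerivAt E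
      (2 * v τ * (f₁ τ * τ * v τ + f₂ τ * τ^2 * u τ + f₃ τ * w τ
        - τ⁻¹ * v τ - (4*q' + 4*lam^2 * ((τ^2+1)^2)⁻¹) * u τ)
       + 2 * u τ * v τ + 2 * w τ * (2 * τ * u τ)) τ := by
    intro τ hτ
    have h3 := (((hv' τ hτ).pow 2).add ((hu' τ hτ).pow 2)).add ((hw' τ hτ).pow 2)
    rw [hEdef]
    refine h3.congr_deriv ?_
    ring
  intro t ht
  set C : ℝ := 2*F*t + (F*t^2 + 4*q' + 4*lam^2 + 1) + F + 2*t with hCdef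
  have hC0 : 0 ≤ C := by
    have : 0 ≤ F*t := mul_nonneg hF ht.le
    have : 0 ≤ F*t^2 := mul_nonneg hF (sq_nonneg t)
    nlinarith [sq_nonneg lam]
  -- pointwise differential inequality
  have hbound : ∀ τ, 0 < τ → τ ≤ t →
      2 * v τ * (f₁ τ * τ * v τ + f₂ τ * τ^2 * u τ + f₃ τ * w τ
        - τ⁻¹ * v τ - (4*q' + 4*lam^2 * ((τ^2+1)^2)⁻¹) * u τ)
       + 2 * u τ * v τ + 2 * w τ * (2 * τ * u τ) ≤ C * E τ := by
    intro τ hτ hτt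
    set μ : ℝ := 4*lam^2 * ((τ^2+1)^2)⁻¹ with hμdef
    have hμ0 : 0 ≤ μ := by positivity
    have hμle : μ ≤ 4*lam^2 := by
      rw [hμdef]
      have h1 : (1:ℝ) ≤ (τ^2+1)^2 := by nlinarith [sq_nonneg τ]
      have h2 : ((τ^2+1)^2)⁻¹ ≤ 1 := by
        rw [inv_le_one_iff₀]; right; exact h1
      nlinarith [sq_nonneg lam]
    have hb1 : 2 * (f₁ τ * τ) * v τ * v τ ≤ (F*t) * (v τ^2 + v τ^2) := by
      apply cross_bound
      rw [abs_mul, abs_of_pos hτ]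
      exact mul_le_mul (hf₁ τ hτ.le) hτt (le_of_lt hτ) hF
    have hb2 : 2 * (f₂ τ * τ^2 - (4*q' + μ) + 1) * u τ * v τ
        ≤ (F*t^2 + 4*q' + 4*lam^2 + 1) * (u τ^2 + v τ^2) := by
      apply cross_bound
      have hf2 := abs_le.mp (hf₂ τ hτ.le)
      have hτ2 : τ^2 ≤ t^2 := by nlinarith
      rw [abs_le]
      constructor <;> nlinarith [sq_nonneg τ, mul_nonneg hF (sq_nonneg τ)]
    have hb3 : 2 * (f₃ τ) * v τ * w τ ≤ F * (v τ^2 + w τ^2) :=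
      cross_bound _ _ _ _ (hf₃ τ hτ.le)
    have hb4 : 2 * (2*τ) * u τ * w τ ≤ (2*t) * (u τ^2 + w τ^2) := by
      apply cross_bound
      rw [abs_of_pos (by linarith : (0:ℝ) < 2*τ)]
      linarith
    have hb5 : 0 ≤ τ⁻¹ * v τ^2 := by positivity
    simp only [hEdef, hCdef]
    exact energy_bound F t q' lam τ μ (v τ) (u τ) (w τ) (f₁ τ) (f₂ τ) (f₃ τ)
      hF hq ht hb1 hb2 hb3 hb4 hb5
  -- Gronwall
  set g : ℝ → ℝ := fun x => E x * Real.exp (-C * x) with hgdef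
  have hg' : ∀ τ ∈ Ioi (0:ℝ), HasDerivAt g
      ((2 * v τ * (f₁ τ * τ * v τ + f₂ τ * τ^2 * u τ + f₃ τ * w τ
        - τ⁻¹ * v τ - (4*q' + 4*lam^2 * ((τ^2+1)^2)⁻¹) * u τ)
       + 2 * u τ * v τ + 2 * w τ * (2 * τ * u τ)) * Real.exp (-C * τ)
       + E τ * (Real.exp (-C * τ) * (-C))) τ := by
    intro τ hτ
    have hexp : HasDerivAt (fun x : ℝ => Real.exp (-C * x)) (Real.exp (-C * τ) * (-C)) τ := by
      have h0 : HasDerivAt (fun x : ℝ => -C * x) (-C) τ := by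
        simpa using (hasDerivAt_id τ).const_mul (-C)
      exact h0.exp
    exact (hE' τ hτ).mul hexp
  have key : ∀ ε, 0 < ε → ε < t → E t ≤ E ε * Real.exp (C * t) := by
    intro ε hε hεt
    have hanti : AntitoneOn g (Icc ε t) := by
      apply antitoneOn_of_deriv_nonpos (convex_Icc ε t)
      · intro x hx
        exact ((hg' x (lt_of_lt_of_le hε hx.1)).continuousAt).continuousWithinAt
      · rw [interior_Icc]
        intro x hx
        exact ((hg' x (lt_trans hε hx.1)).differentiableAt).differentiableWithinAt
      · rw [interior_Icc]
        intro x hx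
        rw [(hg' x (lt_trans hε hx.1)).deriv]
        have hb := hbound x (lt_trans hε hx.1) hx.2.le
        have hep := Real.exp_pos (-C * x)
        nlinarith [mul_le_mul_of_nonneg_right hb hep.le]
    have hgle : g t ≤ g ε := hanti ⟨le_refl ε, hεt.le⟩ ⟨hεt.le, le_refl t⟩ hεt.le
    rw [hgdef] at hgle
    simp only at hgle
    have hE0 : 0 ≤ E ε := by simp only [hEdef]; positivity
    have h1 : Real.exp (-C * ε) ≤ 1 := by
      rw [Real.exp_le_one_iff]
      nlinarith
    have h2 : E ε * Real.exp (-C * ε) ≤ E ε := by nlinarith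
    have h3 : E t * Real.exp (-C * t) ≤ E ε := le_trans hgle h2
    have h4 := mul_le_mul_of_nonneg_right h3 (Real.exp_pos (C * t)).le
    rw [mul_assoc, ← Real.exp_add] at h4
    simpa using h4
  -- limit of E at 0+
  have hIoc : Ioc (0:ℝ) 1 ∈ 𝓝[>] (0:ℝ) :=
    Ioc_mem_nhdsGT_of_mem ⟨le_refl 0, zero_lt_one⟩
  have hulim : Tendsto u (𝓝[>] (0:ℝ)) (𝓝 0) := by
    apply squeeze_zero_norm' (a := fun x => (K + K') * x^2 * (1 + Real.log x ^2))
    · filter_upwards [hIoc] with x hx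
      have b1 := (hKb x hx).1
      have b2 := (hKb' x hx).1
      have htri : |u x| ≤ |a x - O * Real.log x - h| + |a' x - O * Real.log x - h| := by
        simp only [hudef]
        have : a x - a' x = (a x - O * Real.log x - h) - (a' x - O * Real.log x - h) := by ring
        rw [this]
        exact abs_sub_le'' _ _
      calc ‖u x‖ ≤ |a x - O * Real.log x - h| + |a' x - O * Real.log x - h| := htri
        _ ≤ K * x^2 * (1 + Real.log x^2) + K' * x^2 * (1 + Real.log x^2) := add_le_add b1 b2
        _ = (K + K') * x^2 * (1 + Real.log x^2) := by ring
    · have hid : Tendsto (fun x : ℝ => x) (𝓝[>] (0:ℝ)) (𝓝 0) :=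
        tendsto_id.mono_left nhdsWithin_le_nhds
      have := (hid.mul tendsto_mul_one_add_log_sq).const_mul (K + K')
      simp only [mul_zero] at this
      refine this.congr fun x => by ring
  have hvlim : Tendsto v (𝓝[>] (0:ℝ)) (𝓝 0) := by
    apply squeeze_zero_norm' (a := fun x => (K + K') * (x * (1 + Real.log x ^2)))
    · filter_upwards [hIoc] with x hx
      have b1 := (hKb x hx).2
      have b2 := (hKb' x hx).2
      have htri : |v x| ≤ |deriv a x - O / x| + |deriv a' x - O / x| := by
        simp only [hvdef]
        have : deriv a x - deriv a' x = (deriv a x - O / x) - (deriv a' x - O / x) := by ring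
        rw [this]
        exact abs_sub_le'' _ _
      calc ‖v x‖ ≤ |deriv a x - O / x| + |deriv a' x - O / x| := htri
        _ ≤ K * x * (1 + Real.log x^2) + K' * x * (1 + Real.log x^2) := add_le_add b1 b2
        _ = (K + K') * (x * (1 + Real.log x^2)) := by ring
    · have := tendsto_mul_one_add_log_sq.const_mul (K + K')
      simpa using this
  have hwlim : Tendsto w (𝓝[>] (0:ℝ)) (𝓝 0) := by
    have hcw : ContinuousWithinAt w (Ici 0) 0 := by
      rw [hwdef]
      exact ((hcn 0 self_mem_Ici).sub (hcn' 0 self_mem_Ici))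
    have hw0 : w 0 = 0 := by rw [hwdef]; simp [hc0, hc0']
    have := hcw.tendsto
    rw [hw0] at this
    exact this.mono_left (nhdsWithin_mono _ Ioi_subset_Ici_self)
  have hElim : Tendsto E (𝓝[>] (0:ℝ)) (𝓝 0) := by
    have := ((hvlim.pow 2).add (hulim.pow 2)).add (hwlim.pow 2)
    rw [hEdef]
    simpa using this
  -- conclude E t = 0
  have hEt : E t ≤ 0 := by
    have hev : ∀ᶠ ε in 𝓝[>] (0:ℝ), E t ≤ E ε * Real.exp (C * t) := by
      filter_upwards [Ioo_mem_nhdsGT_of_mem ⟨le_refl (0:ℝ), ht⟩] with ε hε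
      exact key ε hε.1 hε.2
    have hlim2 : Tendsto (fun ε => E ε * Real.exp (C * t)) (𝓝[>] (0:ℝ)) (𝓝 0) := by
      have := hElim.mul_const (Real.exp (C * t))
      simpa using this
    exact ge_of_tendsto hlim2 hev
  have hEt0 : 0 ≤ E t := by simp only [hEdef]; positivity
  have hEeq : E t = 0 := le_antisymm hEt hEt0
  rw [hEdef] at hEeq
  simp only at hEeq
  have hu0 : u t = 0 := by
    have : u t ^ 2 = 0 := by nlinarith [sq_nonneg (v t), sq_nonneg (w t)]
    exact pow_eq_zero_iff (n := 2) (by norm_num) |>.mp this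
  have hw0 : w t = 0 := by
    have : w t ^ 2 = 0 := by nlinarith [sq_nonneg (v t), sq_nonneg (u t)]
    exact pow_eq_zero_iff (n := 2) (by norm_num) |>.mp this
  rw [hudef] at hu0
  rw [hwdef] at hw0
  exact ⟨sub_eq_zero.mp hu0, sub_eq_zero.mp hw0⟩
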